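/- arXiv:1307.6818 — 4 statements merged into one kernel-verified Lean document; each statement's English description precedes it below -/
import Mathlib

section
/- For every α ∈ (1,2), p_α(x) converges as x → 0⁺ to 1/|Γ(−1/α)|; equivalently, lim_{x→0⁺} p_α(x) = Γ(1+1/α)·sin(π/α)/π = 1/(α·Γ(1−1/α)). -/
set_option maxHeartbeats 1000000


open Real Filter Set

/-- Feller's series representation of the density of the spectrally positive
`α`-stable law (evaluated at `-x`): for `x > 0`,
`p α x = -(1/(π x)) · Σ_{k ≥ 1} (Γ(1 + k/α)/k!) · (-x)^k · sin(kπ/α)`. -/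
noncomputable def stableDensity (α : ℝ) (x : ℝ) : ℝ :=
  -(1 / (π * x)) * ∑' k : ℕ,
    Real.Gamma (1 + (k + 1 : ℝ) / α) / (Nat.factorial (k + 1) : ℝ)
      * (-x) ^ (k + 1) * Real.sin ((k + 1 : ℝ) * π / α)

/-- As `x → 0⁺`, `p_α(x)` converges to `1/|Γ(-1/α)|`, which moreover equals
`Γ(1 + 1/α)·sin(π/α)/π = 1/(α·Γ(1 - 1/α))`. -/
theorem stableDensity_tendsto_zero (α : ℝ) (hα : α ∈ Set.Ioo (1 : ℝ) 2) :
    Tendsto (stableDensity α) (nhdsWithin 0 (Set.Ioi 0))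
      (nhds (1 / |Real.Gamma (-1 / α)|))
    ∧ 1 / |Real.Gamma (-1 / α)| = Real.Gamma (1 + 1 / α) * Real.sin (π / α) / π
    ∧ Real.Gamma (1 + 1 / α) * Real.sin (π / α) / π
        = 1 / (α * Real.Gamma (1 - 1 / α)) := by
  obtain ⟨hα1, hα2⟩ := hα
  have hαpos : (0:ℝ) < α := lt_trans one_pos hα1
  have hαne : α ≠ 0 := ne_of_gt hαpos
  have hinv1 : (0:ℝ) < 1 / α := by positivity
  have hinv2 : 1 / α < 1 := by rw [div_lt_one hαpos]; exact hα1
  have hΓ1 : 0 < Real.Gamma (1 - 1 / α) := Real.Gamma_pos_of_pos (by linarith)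
  -- Γ(-1/α) = -α * Γ(1-1/α)
  have hneg : Real.Gamma (-1 / α) = -α * Real.Gamma (1 - 1 / α) := by
    have h := Real.Gamma_add_one (s := -1 / α)
      (ne_of_lt (div_neg_of_neg_of_pos (by norm_num) hαpos))
    have he : -1 / α + 1 = 1 - 1 / α := by ring
    rw [he] at h
    field_simp at h ⊢
    linarith [h]
  have hsinpos : 0 < Real.sin (π / α) := by
    apply Real.sin_pos_of_pos_of_lt_pi
    · positivity
    · rw [div_lt_iff₀ hαpos]; nlinarith [pi_pos]
  -- second equality
  have heq2 : Real.Gamma (1 + 1 / α) * Real.sin (π / α) / π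
      = 1 / (α * Real.Gamma (1 - 1 / α)) := by
    have hrefl := Real.Gamma_mul_Gamma_one_sub (1 / α)
    have hadd : Real.Gamma (1 + 1 / α) = (1 / α) * Real.Gamma (1 / α) := by
      rw [add_comm]; exact Real.Gamma_add_one (ne_of_gt hinv1)
    have hsin : Real.sin (π * (1 / α)) = Real.sin (π / α) := by ring_nf
    rw [hsin] at hrefl
    have hΓa : 0 < Real.Gamma (1 / α) := Real.Gamma_pos_of_pos hinv1
    rw [eq_div_iff (ne_of_gt hsinpos)] at hrefl
    have hπ : π ≠ 0 := ne_of_gt pi_pos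
    rw [hadd, eq_div_iff (ne_of_gt (mul_pos hαpos hΓ1))]
    have hexp : 1 / α * Real.Gamma (1 / α) * Real.sin (π / α) / π * (α * Real.Gamma (1 - 1 / α))
        = Real.Gamma (1 / α) * Real.Gamma (1 - 1 / α) * Real.sin (π / α) / π := by
      field_simp
    rw [hexp, hrefl, div_self hπ]
  have heq1 : 1 / |Real.Gamma (-1 / α)| = Real.Gamma (1 + 1 / α) * Real.sin (π / α) / π := by
    rw [hneg, heq2, abs_mul, abs_neg, abs_of_pos hαpos, abs_of_pos hΓ1]
  refine ⟨?_, heq1, heq2⟩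
  -- main limit
  set L : ℝ := 1 / |Real.Gamma (-1 / α)| with hL
  have hLval : L = Real.Gamma (1 + 1 / α) * Real.sin (π / α) / π := heq1
  -- coefficients
  set a : ℕ → ℝ := fun k => (-1) ^ k * (Real.Gamma (1 + (k + 1 : ℝ) / α)
      / (Nat.factorial (k + 1) : ℝ)) * Real.sin ((k + 1 : ℝ) * π / α) / π with ha
  have ha0 : a 0 = L := by
    simp only [ha, hLval]
    norm_num
  -- coefficient bound for k ≥ 1
  have hcoeff : ∀ k : ℕ, 1 ≤ k → Real.Gamma (1 + (k + 1 : ℝ) / α) ≤ (Nat.factorial (k + 1) : ℝ) := by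
    intro k hk
    have hn2 : (2:ℝ) ≤ (k:ℝ) + 1 := by exact_mod_cast Nat.succ_le_succ hk
    have h1 : (2:ℝ) ≤ 1 + ((k:ℝ) + 1) / α := by
      have : (1:ℝ) ≤ ((k:ℝ) + 1) / α := by rw [le_div_iff₀ hαpos]; nlinarith
      linarith
    have h2 : 1 + ((k:ℝ) + 1) / α ≤ ((k:ℝ) + 1) + 1 := by
      have : ((k:ℝ) + 1) / α ≤ (k:ℝ) + 1 := by
        rw [div_le_iff₀ hαpos]; nlinarith
      linarith
    calc Real.Gamma (1 + ((k:ℝ) + 1) / α) ≤ Real.Gamma (((k:ℝ) + 1) + 1) := by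
          rcases eq_or_lt_of_le h2 with h | h
          · rw [h]
          · exact le_of_lt (Real.Gamma_strictMonoOn_Ici h1 (by
              simp only [Set.mem_Ici]; linarith) h)
      _ = (Nat.factorial (k + 1) : ℝ) := by
          rw [show ((k:ℝ) + 1) + 1 = ((k + 1 : ℕ) : ℝ) + 1 by push_cast; ring]
          exact Real.Gamma_nat_eq_factorial (k + 1)
  have habound : ∀ k : ℕ, 1 ≤ k → |a k| ≤ 1 / π := by
    intro k hk
    have hΓpos : 0 < Real.Gamma (1 + (k + 1 : ℝ) / α) :=
      Real.Gamma_pos_of_pos (by positivity)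
    have hfac : (0:ℝ) < (Nat.factorial (k + 1) : ℝ) := by positivity
    have hratio : |Real.Gamma (1 + (k + 1 : ℝ) / α) / (Nat.factorial (k + 1) : ℝ)| ≤ 1 := by
      rw [abs_of_pos (by positivity)]
      rw [div_le_one hfac]
      exact hcoeff k hk
    simp only [ha]
    rw [abs_div, abs_of_pos pi_pos, abs_mul, abs_mul, abs_pow, abs_neg, abs_one, one_pow, one_mul]
    gcongr
    calc |Real.Gamma (1 + (k + 1 : ℝ) / α) / (Nat.factorial (k + 1) : ℝ)|
          * |Real.sin ((k + 1 : ℝ) * π / α)| ≤ 1 * 1 := by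
          exact mul_le_mul hratio (Real.abs_sin_le_one _) (abs_nonneg _) zero_le_one
      _ = 1 := one_mul 1
  -- uniform coefficient bound
  set C : ℝ := (max (Real.Gamma (1 + 1 / α)) 1) / π with hC
  have hCpos : 0 < C := by
    apply div_pos _ pi_pos
    exact lt_of_lt_of_le one_pos (le_max_right _ _)
  have haboundC : ∀ k : ℕ, |a k| ≤ C := by
    intro k
    rcases Nat.eq_zero_or_pos k with h | h
    · subst h
      have hΓ2 : 0 < Real.Gamma (1 + 1 / α) := Real.Gamma_pos_of_pos (by positivity)
      rw [ha0, hLval, abs_of_nonneg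
        (div_nonneg (mul_nonneg hΓ2.le hsinpos.le) pi_pos.le), hC]
      gcongr
      calc Real.Gamma (1 + 1 / α) * Real.sin (π / α) ≤ Real.Gamma (1 + 1 / α) * 1 :=
            mul_le_mul_of_nonneg_left (Real.sin_le_one _) hΓ2.le
        _ = Real.Gamma (1 + 1 / α) := mul_one _
        _ ≤ max (Real.Gamma (1 + 1 / α)) 1 := le_max_left _ _
    · exact (habound k h).trans (by
        rw [hC, le_div_iff₀ pi_pos]
        have := le_max_right (Real.Gamma (1 + 1 / α)) 1
        rw [div_mul_cancel₀]
        · exact this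
        · exact ne_of_gt pi_pos)
  -- for x in (0,1): rewrite stableDensity as a power series
  have key : ∀ x : ℝ, x ∈ Set.Ioo (0:ℝ) 1 → stableDensity α x = ∑' k : ℕ, a k * x ^ k := by
    intro x ⟨hx0, hx1⟩
    have hterm : ∀ k : ℕ, -(1 / (π * x)) * (Real.Gamma (1 + (k + 1 : ℝ) / α)
        / (Nat.factorial (k + 1) : ℝ) * (-x) ^ (k + 1) * Real.sin ((k + 1 : ℝ) * π / α))
        = a k * x ^ k := by
      intro k
      simp only [ha]
      rw [neg_pow, pow_succ]
      have hxne : x ≠ 0 := ne_of_gt hx0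
      have hπne : π ≠ 0 := ne_of_gt pi_pos
      field_simp
      ring
    rw [stableDensity, ← tsum_mul_left]
    exact tsum_congr hterm
  -- summability
  have hsum : ∀ x : ℝ, x ∈ Set.Ioo (0:ℝ) 1 → Summable (fun k : ℕ => a k * x ^ k) := by
    intro x ⟨hx0, hx1⟩
    apply Summable.of_norm
    refine Summable.of_nonneg_of_le (fun k => norm_nonneg _) (fun k => ?_)
      ((summable_geometric_of_lt_one (le_of_lt hx0) hx1).mul_left C)
    rw [Real.norm_eq_abs, abs_mul, abs_pow, abs_of_pos hx0]
    exact mul_le_mul_of_nonneg_right (haboundC k) (by positivity)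
  -- tail bound
  have htail : ∀ x : ℝ, x ∈ Set.Ioo (0:ℝ) (1/2) →
      |stableDensity α x - L| ≤ (2 / π) * x := by
    intro x ⟨hx0, hx12⟩
    have hx1 : x < 1 := by linarith
    have hmem : x ∈ Set.Ioo (0:ℝ) 1 := ⟨hx0, hx1⟩
    rw [key x hmem, Summable.tsum_eq_zero_add (hsum x hmem)]
    simp only [pow_zero, mul_one, ha0]
    rw [add_sub_cancel_left]
    have hsum2 : Summable (fun k : ℕ => a (k + 1) * x ^ (k + 1)) :=
      (hsum x hmem).comp_injective (add_left_injective 1)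
    have hgeo : Summable (fun k : ℕ => (1 / π) * x ^ (k + 1)) := by
      apply Summable.mul_left
      exact (summable_geometric_of_lt_one (le_of_lt hx0) hx1).comp_injective
        (add_left_injective 1)
    calc |∑' k : ℕ, a (k + 1) * x ^ (k + 1)| ≤ ∑' k : ℕ, |a (k + 1) * x ^ (k + 1)| := by
          have h := norm_tsum_le_tsum_norm (f := fun k : ℕ => a (k + 1) * x ^ (k + 1))
            (by simp only [Real.norm_eq_abs]; exact hsum2.abs)
          simp only [Real.norm_eq_abs] at h
          exact h
      _ ≤ ∑' k : ℕ, (1 / π) * x ^ (k + 1) := by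
          apply Summable.tsum_le_tsum _ hsum2.abs hgeo
          intro k
          rw [abs_mul, abs_pow, abs_of_pos hx0]
          exact mul_le_mul_of_nonneg_right (habound (k+1) (Nat.le_add_left 1 k)) (by positivity)
      _ = (1 / π) * (x * (1 - x)⁻¹) := by
          rw [tsum_mul_left]
          congr 1
          have : ∀ k : ℕ, x ^ (k + 1) = x * x ^ k := fun k => by rw [pow_succ]; ring
          rw [tsum_congr this, tsum_mul_left, tsum_geometric_of_lt_one (le_of_lt hx0) hx1]
      _ ≤ (2 / π) * x := by
          have h2 : (1 - x)⁻¹ ≤ 2 := by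
            rw [inv_le_comm₀ (by linarith) (by norm_num)]
            linarith
          have : x * (1 - x)⁻¹ ≤ x * 2 := mul_le_mul_of_nonneg_left h2 (le_of_lt hx0)
          calc (1 / π) * (x * (1 - x)⁻¹) ≤ (1 / π) * (x * 2) :=
                mul_le_mul_of_nonneg_left this (by positivity)
            _ = (2 / π) * x := by ring
  -- conclude
  have hev : ∀ᶠ x in nhdsWithin (0:ℝ) (Set.Ioi 0), ‖stableDensity α x - L‖ ≤ (2 / π) * x := by
    filter_upwards [Ioo_mem_nhdsGT_of_mem (by norm_num : (0:ℝ) ∈ Set.Ico (0:ℝ) (1/2))] with x hx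
    exact htail x hx
  have htend0 : Tendsto (fun x : ℝ => (2 / π) * x) (nhdsWithin (0:ℝ) (Set.Ioi 0)) (nhds 0) := by
    have : Tendsto (fun x : ℝ => (2 / π) * x) (nhds 0) (nhds ((2/π) * 0)) :=
      (continuous_const.mul continuous_id).tendsto 0
    rw [mul_zero] at this
    exact this.mono_left nhdsWithin_le_nhds
  have := squeeze_zero_norm' hev htend0
  have h2 : Tendsto (fun x => stableDensity α x - L + L) (nhdsWithin (0:ℝ) (Set.Ioi 0))
      (nhds (0 + L)) := this.add tendsto_const_nhds
  simpa using h2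
end

section
/- For every α ∈ (0,1): ν_α is a probability distribution on ℕ (its values are nonnegative and sum to 1); for every z ∈ [0,1], Σ_{k≥0} ν_α(k)·z^k = F_α(z) = (2α − 1 + √3·z + (1−z)^{3/2})/(2α − 1 + √3); and its mean satisfies Σ_{k≥0} k·ν_α(k) = (1 + 2(α − 1/2)/√3)^{−1}. In particular, ν_α has mean 1 (is critical) if and only if α = 1/2. -/
open Real Filter Set

/-- Generalized binomial coefficient `binom(r, k) = r(r-1)⋯(r-k+1)/k!`. -/
noncomputable def genBinom (r : ℝ) (k : ℕ) : ℝ :=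
  (∏ i ∈ Finset.range k, (r - (i : ℝ))) / (Nat.factorial k : ℝ)

lemma genBinom_zero (r : ℝ) : genBinom r 0 = 1 := by simp [genBinom]

lemma genBinom_one (r : ℝ) : genBinom r 1 = r := by simp [genBinom]

/-- recurrence: `(k+1) C(r,k+1) = (r-k) C(r,k)`. -/
lemma genBinom_succ (r : ℝ) (k : ℕ) :
    genBinom r (k + 1) * (k + 1) = genBinom r k * (r - k) := by
  have hk : (Nat.factorial k : ℝ) ≠ 0 := Nat.cast_ne_zero.2 (Nat.factorial_ne_zero k)
  have hk1 : ((k:ℝ) + 1) ≠ 0 := by positivity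
  simp only [genBinom, Finset.prod_range_succ, Nat.factorial_succ, Nat.cast_mul,
    Nat.cast_add, Nat.cast_one]
  field_simp

/-- shift: `(k+1) C(r,k+1) = r C(r-1,k)`. -/
lemma genBinom_shift (r : ℝ) (k : ℕ) :
    genBinom r (k + 1) * (k + 1) = r * genBinom (r - 1) k := by
  have hk : (Nat.factorial k : ℝ) ≠ 0 := Nat.cast_ne_zero.2 (Nat.factorial_ne_zero k)
  have hprod : ∏ i ∈ Finset.range (k+1), (r - (i:ℝ))
      = (∏ i ∈ Finset.range k, (r - 1 - (i:ℝ))) * r := by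
    rw [Finset.prod_range_succ']
    congr 1
    · apply Finset.prod_congr rfl; intro i _; push_cast; ring
    · simp
  simp only [genBinom, hprod, Nat.factorial_succ, Nat.cast_mul, Nat.cast_add, Nat.cast_one]
  field_simp

/-- Pascal's rule. -/
lemma genBinom_pascal (r : ℝ) (k : ℕ) :
    genBinom r (k + 1) = genBinom (r - 1) (k + 1) + genBinom (r - 1) k := by
  have hk1 : ((k:ℝ) + 1) ≠ 0 := by positivity
  have h1 := genBinom_succ (r - 1) k
  have h2 := genBinom_shift r k
  field_simp at h1 h2 ⊢
  nlinarith [h1, h2]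

/-- telescoping partial sums of alternating series. -/
lemma genBinom_telescope (r : ℝ) (n : ℕ) :
    ∑ k ∈ Finset.range (n + 1), (-1 : ℝ) ^ k * genBinom r k
      = (-1) ^ n * genBinom (r - 1) n := by
  induction n with
  | zero => simp [genBinom_zero]
  | succ n ih =>
      rw [Finset.sum_range_succ, ih, genBinom_pascal r n]
      ring

/-- bound for small exponent. -/
lemma abs_genBinom_le_one {r : ℝ} (hr : |r| ≤ 1) (n : ℕ) : |genBinom r n| ≤ 1 := by
  have hfac : (0:ℝ) < (Nat.factorial n : ℝ) := by positivity
  rw [genBinom, abs_div, abs_of_pos hfac, div_le_one hfac]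
  calc |∏ i ∈ Finset.range n, (r - (i:ℝ))| = ∏ i ∈ Finset.range n, |r - (i:ℝ)| := by
        rw [Finset.abs_prod]
    _ ≤ ∏ i ∈ Finset.range n, ((i:ℝ) + 1) := by
        apply Finset.prod_le_prod (fun i _ => abs_nonneg _)
        intro i _
        calc |r - (i:ℝ)| ≤ |r| + |(i:ℝ)| := abs_sub _ _
          _ ≤ 1 + i := by
              have : |(i:ℝ)| = i := abs_of_nonneg (Nat.cast_nonneg i)
              linarith
          _ = (i:ℝ) + 1 := by ring
    _ = (Nat.factorial n : ℝ) := by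
        clear hfac
        induction n with
        | zero => simp
        | succ m ihm => rw [Finset.prod_range_succ, ihm, Nat.factorial_succ]; push_cast; ring

lemma genBinom_32_sign {k : ℕ} (hk : 2 ≤ k) : 0 ≤ (-1 : ℝ) ^ k * genBinom (3/2) k := by
  induction k, hk using Nat.le_induction with
  | base => simp [genBinom, Finset.prod_range_succ]; norm_num
  | succ k hk ih =>
      have h := genBinom_succ (3/2) k
      have hk1 : ((k:ℝ) + 1) ≠ 0 := by positivity
      have : genBinom (3/2) (k+1) = genBinom (3/2) k * (3/2 - k) / (k+1) := by
        field_simp at h ⊢; linarith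
      rw [this]
      have hknn : (2:ℝ) ≤ k := by exact_mod_cast hk
      have : (-1:ℝ)^(k+1) * (genBinom (3/2) k * (3/2 - k) / (k+1))
          = ((-1:ℝ)^k * genBinom (3/2) k) * (((k:ℝ) - 3/2) / (k+1)) := by
        ring
      rw [this]
      apply mul_nonneg ih
      apply div_nonneg (by linarith) (by positivity)

lemma genBinom_12_sign {k : ℕ} (hk : 1 ≤ k) : (-1 : ℝ) ^ k * genBinom (1/2) k ≤ 0 := by
  induction k, hk using Nat.le_induction with
  | base => rw [genBinom_one]; norm_num
  | succ k hk ih =>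
      have h := genBinom_succ (1/2) k
      have hk1 : ((k:ℝ) + 1) ≠ 0 := by positivity
      have : genBinom (1/2) (k+1) = genBinom (1/2) k * (1/2 - k) / (k+1) := by
        field_simp at h ⊢; linarith
      rw [this]
      have hknn : (1:ℝ) ≤ k := by exact_mod_cast hk
      have heq : (-1:ℝ)^(k+1) * (genBinom (1/2) k * (1/2 - k) / (k+1))
          = ((-1:ℝ)^k * genBinom (1/2) k) * (((k:ℝ) - 1/2) / (k+1)) := by
        ring
      rw [heq]
      exact mul_nonpos_of_nonpos_of_nonneg ih (div_nonneg (by linarith) (by positivity))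

lemma ratio_bound (r x : ℝ) (hx : |x| < 1) :
    ∀ᶠ k : ℕ in atTop, |x| * |r - k| ≤ ((1 + |x|)/2) * k := by
  set q : ℝ := (1 + |x|)/2 with hq
  have hqx : 0 < q - |x| := by
    have := abs_nonneg x; simp only [hq]; linarith
  rw [eventually_atTop]
  refine ⟨⌈|x| * |r| / (q - |x|)⌉₊ + 1, fun k hk => ?_⟩
  have hk' : |x| * |r| / (q - |x|) ≤ (k : ℝ) := by
    calc |x| * |r| / (q - |x|) ≤ (⌈|x| * |r| / (q - |x|)⌉₊ : ℝ) := Nat.le_ceil _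
      _ ≤ (k : ℝ) := by exact_mod_cast le_trans (Nat.le_succ _) hk
  have h1 : |x| * |r| ≤ (q - |x|) * k := by
    rw [div_le_iff₀ hqx] at hk'; linarith
  have h2 : |r - (k:ℝ)| ≤ |r| + k := by
    calc |r - (k:ℝ)| ≤ |r| + |(k:ℝ)| := abs_sub _ _
      _ = |r| + k := by rw [abs_of_nonneg (Nat.cast_nonneg k : (0:ℝ) ≤ k)]
  have hxnn := abs_nonneg x
  nlinarith [abs_nonneg r]

lemma summable_genBinom_mul (r x : ℝ) (hx : |x| < 1) :
    Summable (fun k => genBinom r k * x ^ k) := by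
  set q : ℝ := (1 + |x|)/2 with hq
  have hq1 : q < 1 := by simp only [hq]; linarith
  apply summable_of_ratio_norm_eventually_le hq1
  filter_upwards [ratio_bound r x hx] with k hk
  rw [← hq] at hk
  have hk1 : (0:ℝ) < (k:ℝ) + 1 := by positivity
  have hrec := genBinom_succ r k
  have habs : |genBinom r (k+1)| * ((k:ℝ)+1) = |genBinom r k| * |r - k| := by
    rw [← abs_of_pos hk1, ← abs_mul, hrec, abs_mul]
  have hql : |x| * |r - (k:ℝ)| ≤ q * ((k:ℝ)+1) := by
    have : q * (k:ℝ) ≤ q * ((k:ℝ)+1) := by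
      have hq0 : 0 ≤ q := by simp only [hq]; positivity
      nlinarith
    linarith
  simp only [norm_mul, norm_pow, Real.norm_eq_abs]
  rw [pow_succ]
  have key : |genBinom r (k+1)| * |x| ≤ q * |genBinom r k| := by
    rw [← mul_le_mul_iff_of_pos_right hk1]
    calc |genBinom r (k+1)| * |x| * ((k:ℝ)+1)
        = |x| * (|genBinom r (k+1)| * ((k:ℝ)+1)) := by ring
      _ = |genBinom r k| * (|x| * |r - k|) := by rw [habs]; ring
      _ ≤ |genBinom r k| * (q * ((k:ℝ)+1)) := by
          apply mul_le_mul_of_nonneg_left hql (abs_nonneg _)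
      _ = q * |genBinom r k| * ((k:ℝ)+1) := by ring
  calc |genBinom r (k+1)| * (|x|^k * |x|) = (|genBinom r (k+1)| * |x|) * |x|^k := by ring
    _ ≤ (q * |genBinom r k|) * |x|^k := by
        apply mul_le_mul_of_nonneg_right key (by positivity)
    _ = q * (|genBinom r k| * |x|^k) := by ring

lemma summable_genBinom_deriv (r x : ℝ) (hx : |x| < 1) :
    Summable (fun k => genBinom r k * ((k:ℝ) * x ^ (k - 1))) := by
  set q : ℝ := (1 + |x|)/2 with hq
  have hq1 : q < 1 := by simp only [hq]; linarith
  apply summable_of_ratio_norm_eventually_le hq1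
  filter_upwards [ratio_bound r x hx, eventually_ge_atTop 1] with k hk hk1
  rw [← hq] at hk
  have hkpos : (0:ℝ) < (k:ℝ) := by exact_mod_cast hk1
  have hk1pos : (0:ℝ) < (k:ℝ) + 1 := by positivity
  have hrec := genBinom_succ r k
  have habs : |genBinom r (k+1)| * ((k:ℝ)+1) = |genBinom r k| * |r - k| := by
    rw [← abs_of_pos hk1pos, ← abs_mul, hrec, abs_mul]
  obtain ⟨m, rfl⟩ : ∃ m, k = m + 1 := ⟨k - 1, (Nat.succ_pred_eq_of_pos hk1).symm⟩
  simp only [norm_mul, norm_pow, Real.norm_eq_abs, Nat.add_sub_cancel]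
  have hpow : |x| ^ (m + 1) = |x| ^ m * |x| := pow_succ _ _
  push_cast
  have h1 : |((m:ℝ)+1)+1| = ((m:ℝ)+1)+1 := abs_of_pos (by positivity)
  have h2 : |(m:ℝ)+1| = (m:ℝ)+1 := abs_of_pos (by positivity)
  rw [h1, h2, hpow]
  -- goal: |genBinom r (m+2)| * ((m+1+1) * (|x|^m * |x|)) ≤ q * (|genBinom r (m+1)| * ((m+1) * |x|^m))
  have key : |genBinom r (m+1)| * |r - ((m:ℝ)+1)| * |x| ≤ q * (|genBinom r (m+1)| * ((m:ℝ)+1)) := by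
    have h3 := hk
    push_cast at h3
    have h4 := mul_le_mul_of_nonneg_left h3 (abs_nonneg (genBinom r (m+1)))
    nlinarith [abs_nonneg (genBinom r (m+1))]
  have habs' : |genBinom r (m+1+1)| * (((m:ℝ)+1)+1) = |genBinom r (m+1)| * |r - ((m:ℝ)+1)| := by
    push_cast at habs; convert habs using 2 <;> push_cast <;> ring
  calc |genBinom r (m+1+1)| * ((((m:ℝ)+1)+1) * (|x|^m * |x|))
      = (|genBinom r (m+1+1)| * (((m:ℝ)+1)+1)) * |x| * |x|^m := by ring
    _ = |genBinom r (m+1)| * |r - ((m:ℝ)+1)| * |x| * |x|^m := by rw [habs']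
    _ ≤ (q * (|genBinom r (m+1)| * ((m:ℝ)+1))) * |x|^m := by
        apply mul_le_mul_of_nonneg_right key (by positivity)
    _ = q * (|genBinom r (m+1)| * (((m:ℝ)+1) * |x|^m)) := by ring

lemma binom_ode (r : ℝ) {y : ℝ} (hy : |y| < 1) :
    (1 + y) * ∑' k, genBinom r k * ((k:ℝ) * y ^ (k - 1))
      = r * ∑' k, genBinom r k * y ^ k := by
  have hS1 : Summable (fun k => genBinom r k * ((k:ℝ) * y ^ (k-1))) :=
    summable_genBinom_deriv r y hy
  have hS0 : Summable (fun k => genBinom r k * y ^ k) := summable_genBinom_mul r y hy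
  have hshift : Summable (fun k => genBinom r (k+1) * (((k:ℝ)+1) * y ^ k)) := by
    have := (summable_nat_add_iff 1).2 hS1
    apply this.congr
    intro k
    simp [Nat.add_sub_cancel]
  have hT2 : Summable (fun k => genBinom r k * ((k:ℝ) * y ^ k)) := by
    apply (hS1.mul_left y).congr
    intro k
    cases k with
    | zero => simp
    | succ m => simp [Nat.add_sub_cancel, pow_succ]; push_cast; ring
  have e1 : ∑' k, genBinom r k * ((k:ℝ) * y ^ (k-1))
      = ∑' k, genBinom r (k+1) * (((k:ℝ)+1) * y ^ k) := by
    rw [Summable.tsum_eq_zero_add hS1]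
    simp only [Nat.cast_zero, zero_mul, mul_zero, zero_add, Nat.add_sub_cancel]
    apply tsum_congr; intro k; push_cast; ring
  have e2 : y * ∑' k, genBinom r k * ((k:ℝ) * y ^ (k-1))
      = ∑' k, genBinom r k * ((k:ℝ) * y ^ k) := by
    rw [← tsum_mul_left]
    apply tsum_congr; intro k
    cases k with
    | zero => simp
    | succ m => simp only [pow_succ, Nat.add_sub_cancel]; push_cast; ring
  have key : ∑' k, genBinom r (k+1) * (((k:ℝ)+1) * y ^ k)
        + ∑' k, genBinom r k * ((k:ℝ) * y ^ k)
      = r * ∑' k, genBinom r k * y ^ k := by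
    rw [← tsum_mul_left, ← Summable.tsum_add hshift hT2]
    apply tsum_congr; intro k
    have h := genBinom_succ r k
    have : genBinom r (k+1) * (((k:ℝ)+1) * y ^ k) = genBinom r k * (r - k) * y ^ k := by
      rw [show genBinom r (k+1) * (((k:ℝ)+1) * y ^ k)
        = (genBinom r (k+1) * ((k:ℝ)+1)) * y ^ k by ring, h]
    rw [this]; ring
  calc (1 + y) * ∑' k, genBinom r k * ((k:ℝ) * y ^ (k-1))
      = (∑' k, genBinom r k * ((k:ℝ) * y ^ (k-1)))
        + y * ∑' k, genBinom r k * ((k:ℝ) * y ^ (k-1)) := by ring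
    _ = r * ∑' k, genBinom r k * y ^ k := by rw [e2, e1, key]

lemma hasDerivAt_binomSum (r : ℝ) {b : ℝ} (hb0 : 0 < b) (hb : b < 1) {x : ℝ}
    (hx : x ∈ Set.Ioo (-b) b) :
    HasDerivAt (fun y => ∑' k, genBinom r k * y ^ k)
      (∑' k, genBinom r k * ((k:ℝ) * x ^ (k - 1))) x := by
  have hbb : |b| < 1 := by rw [abs_of_pos hb0]; exact hb
  apply hasDerivAt_tsum_of_isPreconnected
    (u := fun k => |genBinom r k * ((k:ℝ) * b ^ (k-1))|)
    (g' := fun k y => genBinom r k * ((k:ℝ) * y ^ (k-1)))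
    ((summable_genBinom_deriv r b hbb).abs) isOpen_Ioo (convex_Ioo (-b) b).isPreconnected
    (fun n y _ => (hasDerivAt_pow n y).const_mul _) ?_ (Set.mem_Ioo.2 ⟨by linarith, hb0⟩) ?_ hx
  · intro n y hy
    rcases Set.mem_Ioo.1 hy with ⟨h1, h2⟩
    have hyb : |y| ≤ b := by rw [abs_le]; constructor <;> linarith
    have hyb' : |y| ≤ |b| := by rwa [abs_of_pos hb0]
    have hcast : |(n:ℝ)| = (n:ℝ) := abs_of_nonneg (Nat.cast_nonneg n)
    rw [Real.norm_eq_abs, abs_mul, abs_mul, abs_pow, hcast,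
      abs_mul, abs_mul, abs_pow, hcast]
    gcongr
  · exact summable_genBinom_mul r 0 (by simp)

theorem binomSum_eq (r : ℝ) {x : ℝ} (hx : |x| < 1) :
    ∑' k, genBinom r k * x ^ k = (1 + x) ^ r := by
  set b : ℝ := (|x| + 1)/2 with hbdef
  have habs := abs_nonneg x
  have hb0 : 0 < b := by positivity
  have hb1 : b < 1 := by simp only [hbdef]; linarith
  have hxb : x ∈ Set.Ioo (-b) b := by
    constructor
    · have := neg_abs_le x; simp only [hbdef]; linarith
    · have := le_abs_self x; simp only [hbdef]; linarith
  let h : ℝ → ℝ := fun y => (∑' k, genBinom r k * y ^ k) * (1 + y) ^ (-r)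
  have hderiv : ∀ y ∈ Set.Ioo (-b) b, HasDerivAt h 0 y := by
    intro y hy
    have hy1 : (0:ℝ) < 1 + y := by
      rcases Set.mem_Ioo.1 hy with ⟨h1, _⟩; linarith
    have hyabs : |y| < 1 := by
      rcases Set.mem_Ioo.1 hy with ⟨h1, h2⟩
      rw [abs_lt]; constructor <;> linarith
    have hfd := hasDerivAt_binomSum r hb0 hb1 hy
    have h1d : HasDerivAt (fun t : ℝ => 1 + t) 1 y := by
      simpa using (hasDerivAt_id y).const_add 1
    have hgd : HasDerivAt (fun t : ℝ => (1 + t) ^ (-r)) (-r * (1 + y) ^ (-r - 1)) y := by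
      have := h1d.rpow_const (p := -r) (Or.inl hy1.ne')
      simpa using this
    have hprod := hfd.mul hgd
    have hode := binom_ode r hyabs
    have hkey : (∑' k, genBinom r k * ((k:ℝ) * y ^ (k-1))) * (1 + y) ^ (-r)
        + (∑' k, genBinom r k * y ^ k) * (-r * (1 + y) ^ (-r - 1)) = 0 := by
      have hrpow : (1 + y) ^ (-r) = (1 + y) ^ (-r - 1) * (1 + y) := by
        conv_lhs => rw [show (-r) = (-r - 1) + 1 by ring]
        rw [Real.rpow_add_one hy1.ne']
      rw [hrpow]
      have : (∑' k, genBinom r k * ((k:ℝ) * y ^ (k-1))) * ((1 + y) ^ (-r - 1) * (1 + y))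
          = ((1 + y) * ∑' k, genBinom r k * ((k:ℝ) * y ^ (k-1))) * (1 + y) ^ (-r - 1) := by
        ring
      rw [this, hode]
      ring
    show HasDerivAt (fun y => (∑' k, genBinom r k * y ^ k) * (1 + y) ^ (-r)) 0 y
    rw [← hkey]
    exact hprod
  have hconst : h x = h 0 := by
    apply (convex_Ioo (-b) b).is_const_of_fderivWithin_eq_zero (𝕜 := ℝ)
    · intro y hy
      exact (hderiv y hy).differentiableAt.differentiableWithinAt
    · intro y hy
      rw [fderivWithin_of_isOpen isOpen_Ioo hy, (hderiv y hy).hasFDerivAt.fderiv]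
      ext t
      simp
    · exact hxb
    · exact Set.mem_Ioo.2 ⟨by linarith, hb0⟩
  have hf0 : (∑' k, genBinom r k * (0:ℝ) ^ k) = 1 := by
    rw [tsum_eq_single 0 (fun k hk => by simp [zero_pow hk])]
    simp [genBinom_zero]
  have hx1 : (0:ℝ) < 1 + x := by
    have := neg_abs_le x; linarith
  have hne : (1 + x) ^ r ≠ 0 := (Real.rpow_pos_of_pos hx1 r).ne'
  have : (∑' k, genBinom r k * x ^ k) * (1 + x) ^ (-r) = 1 := by
    have := hconst
    simp only [h] at this
    rw [this, hf0]
    simp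
  rw [Real.rpow_neg hx1.le] at this
  field_simp at this
  exact this

lemma summable_alt32 : Summable (fun k => (-1:ℝ)^k * genBinom (3/2) k) := by
  set f : ℕ → ℝ := fun k => (-1:ℝ)^k * genBinom (3/2) k with hfdef
  rw [← summable_nat_add_iff 2]
  apply summable_of_sum_range_le (c := 2)
  · intro k
    exact genBinom_32_sign (by omega)
  · intro n
    have hsplit : ∑ k ∈ Finset.range n, f (k + 2)
        = (∑ j ∈ Finset.range (n + 2), f j) - f 1 - f 0 := by
      rw [Finset.sum_range_succ' (fun j => f j) (n+1), Finset.sum_range_succ' (fun j => f (j+1)) n]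
      ring
    have htel := genBinom_telescope (3/2) (n + 1)
    have hb : |genBinom ((3:ℝ)/2 - 1) (n+1)| ≤ 1 := by
      apply abs_genBinom_le_one
      rw [abs_le]; norm_num
    have hf0 : f 0 = 1 := by simp [hfdef, genBinom_zero]
    have hf1 : f 1 = -(3/2) := by simp [hfdef, genBinom_one]
    rw [hsplit, hf0, hf1]
    have : ∑ j ∈ Finset.range (n + 2), f j = (-1)^(n+1) * genBinom ((3:ℝ)/2 - 1) (n+1) := htel
    rw [this]
    have h2 : (-1:ℝ)^(n+1) * genBinom ((3:ℝ)/2 - 1) (n+1) ≤ 1 := by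
      calc (-1:ℝ)^(n+1) * genBinom ((3:ℝ)/2 - 1) (n+1)
          ≤ |(-1:ℝ)^(n+1) * genBinom ((3:ℝ)/2 - 1) (n+1)| := le_abs_self _
        _ = |genBinom ((3:ℝ)/2 - 1) (n+1)| := by rw [abs_mul]; simp
        _ ≤ 1 := hb
    linarith

lemma summable_alt12 : Summable (fun k => (-1:ℝ)^k * genBinom (1/2) k) := by
  set f : ℕ → ℝ := fun k => (-1:ℝ)^k * genBinom (1/2) k with hfdef
  rw [← summable_nat_add_iff 1]
  rw [← summable_neg_iff]
  apply summable_of_sum_range_le (c := 2)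
  · intro k
    simp only [Pi.neg_apply, neg_nonneg]
    exact genBinom_12_sign (by omega)
  · intro n
    have hsplit : ∑ k ∈ Finset.range n, -f (k + 1)
        = -((∑ j ∈ Finset.range (n + 1), f j) - f 0) := by
      rw [Finset.sum_neg_distrib, Finset.sum_range_succ' (fun j => f j) n]
      ring
    have htel := genBinom_telescope (1/2) n
    have hb : |genBinom ((1:ℝ)/2 - 1) n| ≤ 1 := by
      apply abs_genBinom_le_one
      rw [abs_le]; norm_num
    have hf0 : f 0 = 1 := by simp [hfdef, genBinom_zero]
    rw [hsplit, hf0]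
    have : ∑ j ∈ Finset.range (n + 1), f j = (-1)^n * genBinom ((1:ℝ)/2 - 1) n := htel
    rw [this]
    have h2 : -((-1:ℝ)^n * genBinom ((1:ℝ)/2 - 1) n) ≤ 1 := by
      calc -((-1:ℝ)^n * genBinom ((1:ℝ)/2 - 1) n)
          ≤ |(-1:ℝ)^n * genBinom ((1:ℝ)/2 - 1) n| := neg_le_abs _
        _ = |genBinom ((1:ℝ)/2 - 1) n| := by rw [abs_mul]; simp
        _ ≤ 1 := hb
    linarith

open Topology in
lemma tsum_alt_eq_zero {r : ℝ} (hr : 0 < r)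
    (hsum : Summable (fun k => (-1:ℝ)^k * genBinom r k)) :
    ∑' k, (-1:ℝ)^k * genBinom r k = 0 := by
  set f : ℕ → ℝ := fun k => (-1:ℝ)^k * genBinom r k with hfdef
  have habel := Real.tendsto_tsum_powerSeries_nhdsWithin_lt hsum.hasSum.tendsto_sum_nat
  have heq : (fun x : ℝ => ∑' n, f n * x ^ n) =ᶠ[𝓝[<] (1:ℝ)]
      (fun x : ℝ => (1 - x) ^ r) := by
    filter_upwards [Ioo_mem_nhdsLT_of_mem (Set.mem_Ioc.2 ⟨(by norm_num : (0:ℝ) < 1), le_refl 1⟩)]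
      with x hx
    rcases Set.mem_Ioo.1 hx with ⟨hx0, hx1⟩
    have hax : |(-x)| < 1 := by rw [abs_neg, abs_of_pos hx0]; exact hx1
    have := binomSum_eq r hax
    rw [show (1 : ℝ) + -x = 1 - x by ring] at this
    rw [← this]
    apply tsum_congr
    intro k
    simp only [hfdef]
    rw [neg_pow]
    ring
  have h2 : Filter.Tendsto (fun x : ℝ => (1 - x) ^ r) (𝓝[<] (1:ℝ)) (𝓝 0) := by
    have hc : Filter.Tendsto (fun x : ℝ => 1 - x) (𝓝[<] (1:ℝ)) (𝓝 0) := by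
      have hcont : Continuous (fun x : ℝ => 1 - x) := by continuity
      have : Filter.Tendsto (fun x : ℝ => 1 - x) (𝓝 (1:ℝ)) (𝓝 0) := by
        have := hcont.tendsto (1:ℝ)
        simpa using this
      exact this.mono_left nhdsWithin_le_nhds
    have hrc : ContinuousAt (fun t : ℝ => t ^ r) 0 := by
      apply Real.continuousAt_rpow_const
      right; exact hr.le
    have := hrc.tendsto.comp hc
    simpa [Function.comp_def, Real.zero_rpow hr.ne'] using this
  have := habel.congr' heq
  exact tendsto_nhds_unique this h2

lemma hasSum_binom32 {z : ℝ} (hz : z ∈ Set.Icc (0:ℝ) 1) :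
    HasSum (fun k => (-1:ℝ)^k * genBinom (3/2) k * z^k) ((1 - z) ^ ((3:ℝ)/2)) := by
  rcases eq_or_lt_of_le hz.2 with h1 | h1
  · subst h1
    simp only [one_pow, mul_one, sub_self]
    rw [Real.zero_rpow (by norm_num)]
    have h := summable_alt32.hasSum
    rwa [tsum_alt_eq_zero (by norm_num) summable_alt32] at h
  · have hax : |(-z)| < 1 := by rw [abs_neg, abs_of_nonneg hz.1]; exact h1
    have hs := (summable_genBinom_mul (3/2) (-z) hax).hasSum
    rw [binomSum_eq (3/2) hax, show (1:ℝ) + -z = 1 - z by ring] at hs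
    have heq : (fun k => genBinom (3/2) k * (-z)^k)
        = (fun k => (-1:ℝ)^k * genBinom (3/2) k * z^k) := by
      funext k; rw [neg_pow]; ring
    rwa [heq] at hs

lemma hasSum12 : HasSum (fun k => (-1:ℝ)^k * genBinom (1/2) k) 0 := by
  have h := summable_alt12.hasSum
  rwa [tsum_alt_eq_zero (by norm_num) summable_alt12] at h

/-- The coefficients `q_k = 12^{-k} [y^k] W(r_c, y)`: explicitly
`q_1 = (1/12)(1/2 - √3/4)` and `q_k = (-1)^k binom(3/2, k)/(24√3)` for `k ≥ 2`. -/
noncomputable def qCoeff : ℕ → ℝ := fun k =>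
  if k = 1 then (1 / 12) * (1 / 2 - Real.sqrt 3 / 4)
  else (-1 : ℝ) ^ k * genBinom (3 / 2) k / (24 * Real.sqrt 3)

/-- The offspring distribution `ν_α` on `ℕ`: with `γ = √3 - 1` and `r_c = 1/(12√3)`,
`ν_α(0) = 2α/(γ + 2α)` and `ν_α(k) = 2 q_k/(r_c (γ + 2α))` for `k ≥ 1`. -/
noncomputable def nuAlpha (α : ℝ) : ℕ → ℝ := fun k =>
  if k = 0 then 2 * α / ((Real.sqrt 3 - 1) + 2 * α)
  else 2 * qCoeff k / ((1 / (12 * Real.sqrt 3)) * ((Real.sqrt 3 - 1) + 2 * α))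

/-- For every `α ∈ (0,1)`, `ν_α` is a probability distribution on `ℕ` with generating
function `F_α(z) = (2α - 1 + √3 z + (1-z)^{3/2})/(2α - 1 + √3)` on `[0,1]` and mean
`(1 + 2(α - 1/2)/√3)⁻¹`; in particular it is critical iff `α = 1/2`. -/
theorem nuAlpha_probability_and_mean (α : ℝ) (hα : α ∈ Set.Ioo (0 : ℝ) 1) :
    (∀ k : ℕ, 0 ≤ nuAlpha α k)
    ∧ (∑' k : ℕ, nuAlpha α k) = 1
    ∧ (∀ z ∈ Set.Icc (0 : ℝ) 1,
        (∑' k : ℕ, nuAlpha α k * z ^ k)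
          = (2 * α - 1 + Real.sqrt 3 * z + (1 - z) ^ ((3 : ℝ) / 2))
              / (2 * α - 1 + Real.sqrt 3))
    ∧ (∑' k : ℕ, (k : ℝ) * nuAlpha α k) = (1 + 2 * (α - 1 / 2) / Real.sqrt 3)⁻¹
    ∧ ((∑' k : ℕ, (k : ℝ) * nuAlpha α k) = 1 ↔ α = 1 / 2) := by
  obtain ⟨hα0, hα1⟩ := hα
  have hs2 : Real.sqrt 3 ^ 2 = 3 := Real.sq_sqrt (by norm_num)
  have hs0 : 0 < Real.sqrt 3 := Real.sqrt_pos.2 (by norm_num)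
  have hs32 : 3/2 < Real.sqrt 3 := by nlinarith
  have hsne : Real.sqrt 3 ≠ 0 := ne_of_gt hs0
  have hD0 : 0 < 2 * α - 1 + Real.sqrt 3 := by nlinarith
  have hDne : 2 * α - 1 + Real.sqrt 3 ≠ 0 := ne_of_gt hD0
  set g : ℕ → ℝ := fun k => if k = 0 then 2*α else if k = 1 then Real.sqrt 3 - 3/2
    else (-1:ℝ)^k * genBinom (3/2) k with hgdef
  have hnu : ∀ k, nuAlpha α k = g k / (2 * α - 1 + Real.sqrt 3) := by
    intro k
    match k with
    | 0 =>
        show 2 * α / ((Real.sqrt 3 - 1) + 2 * α) = _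
        rw [show (Real.sqrt 3 - 1) + 2 * α = 2 * α - 1 + Real.sqrt 3 by ring]
        simp [hgdef]
    | 1 =>
        show 2 * qCoeff 1 / ((1 / (12 * Real.sqrt 3)) * ((Real.sqrt 3 - 1) + 2 * α)) = _
        have hq : qCoeff 1 = (1 / 12) * (1 / 2 - Real.sqrt 3 / 4) := by simp [qCoeff]
        rw [hq, show g 1 = Real.sqrt 3 - 3/2 by simp [hgdef]]
        rw [show (1 / (12 * Real.sqrt 3)) * ((Real.sqrt 3 - 1) + 2 * α)
          = (2 * α - 1 + Real.sqrt 3) / (12 * Real.sqrt 3) by field_simp; ring,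
          div_div_eq_mul_div]
        congr 1
        nlinarith [hs2]
    | (n+2) =>
        show 2 * qCoeff (n+2) / ((1 / (12 * Real.sqrt 3)) * ((Real.sqrt 3 - 1) + 2 * α)) = _
        have hq : qCoeff (n+2) = (-1:ℝ)^(n+2) * genBinom (3/2) (n+2) / (24 * Real.sqrt 3) := by
          simp [qCoeff]
        have hg : g (n+2) = (-1:ℝ)^(n+2) * genBinom (3/2) (n+2) := by
          simp only [hgdef]
          rw [if_neg (by omega), if_neg (by omega)]
        rw [hq, hg]
        rw [show (1 / (12 * Real.sqrt 3)) * ((Real.sqrt 3 - 1) + 2 * α)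
          = (2 * α - 1 + Real.sqrt 3) / (12 * Real.sqrt 3) by field_simp; ring,
          div_div_eq_mul_div]
        congr 1
        field_simp
        ring
  have hmain : ∀ z ∈ Set.Icc (0:ℝ) 1,
      HasSum (fun k => nuAlpha α k * z^k)
        ((2 * α - 1 + Real.sqrt 3 * z + (1 - z)^((3:ℝ)/2)) / (2 * α - 1 + Real.sqrt 3)) := by
    intro z hz
    have hb := hasSum_binom32 hz
    have hd : HasSum (fun k : ℕ => (if k = 0 then 2*α - 1 else 0)
        + (if k = 1 then Real.sqrt 3 * z else 0)) ((2*α - 1) + Real.sqrt 3 * z) :=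
      (hasSum_ite_eq 0 (2*α - 1)).add (hasSum_ite_eq 1 (Real.sqrt 3 * z))
    have hsum := hb.add hd
    have heq : (fun k => (-1:ℝ)^k * genBinom (3/2) k * z^k
        + ((if k = 0 then 2*α - 1 else 0) + (if k = 1 then Real.sqrt 3 * z else 0)))
        = fun k => g k * z^k := by
      funext k
      match k with
      | 0 => simp [hgdef, genBinom_zero]
      | 1 => simp [hgdef, genBinom_one]; ring
      | (m+2) =>
          simp only [hgdef, if_neg (by omega : ¬ m+2 = 0), if_neg (by omega : ¬ m+2 = 1)]
          ring_nf
    rw [heq] at hsum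
    have hfin := hsum.div_const (2 * α - 1 + Real.sqrt 3)
    have heq2 : (fun k => g k * z^k / (2 * α - 1 + Real.sqrt 3))
        = fun k => nuAlpha α k * z^k := by
      funext k; rw [hnu k]; ring
    rw [heq2] at hfin
    have : (1 - z)^((3:ℝ)/2) + (2*α - 1 + Real.sqrt 3 * z)
        = 2 * α - 1 + Real.sqrt 3 * z + (1 - z)^((3:ℝ)/2) := by ring
    rwa [this] at hfin
  -- mean
  have h1 : HasSum (fun n : ℕ => (-1:ℝ)^(n+1) * genBinom (1/2) (n+1)) (-1) := by
    apply (hasSum_nat_add_iff (f := fun k : ℕ => (-1:ℝ)^k * genBinom (1/2) k) 1).2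
    have : (-1 : ℝ) + ∑ i ∈ Finset.range 1, (-1:ℝ)^i * genBinom (1/2) i = 0 := by
      simp [genBinom_zero]
    rw [this]
    exact hasSum12
  have h2 := h1.mul_left (-(3/2))
  have h3 : HasSum (fun n : ℕ => ((n:ℝ)+2) * g (n+2)) (3/2) := by
    have heq : (fun n : ℕ => -(3/2) * ((-1:ℝ)^(n+1) * genBinom (1/2) (n+1)))
        = fun n : ℕ => ((n:ℝ)+2) * g (n+2) := by
      funext n
      have hg : g (n+2) = (-1:ℝ)^(n+2) * genBinom (3/2) (n+2) := by
        simp only [hgdef]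
        rw [if_neg (by omega), if_neg (by omega)]
      have hsh := genBinom_shift (3/2) (n+1)
      rw [show (3:ℝ)/2 - 1 = 1/2 by norm_num] at hsh
      rw [hg, show n+2 = (n+1)+1 from rfl, pow_succ]
      push_cast at hsh ⊢
      linear_combination (-((-1:ℝ)^n)) * hsh
    rw [← heq]
    have e : (-(3/2):ℝ) * -1 = 3/2 := by norm_num
    rw [e] at h2; exact h2
  have h4 : HasSum (fun k : ℕ => (k:ℝ) * g k) (Real.sqrt 3) := by
    have heq : (fun n : ℕ => ((n:ℝ)+2) * g (n+2)) = fun n : ℕ => ((n+2 : ℕ):ℝ) * g (n+2) := by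
      funext n; push_cast; ring
    rw [heq] at h3
    have := (hasSum_nat_add_iff (f := fun k : ℕ => (k:ℝ) * g k) 2).1 h3
    have hv : (3:ℝ)/2 + ∑ i ∈ Finset.range 2, (i:ℝ) * g i = Real.sqrt 3 := by
      rw [Finset.sum_range_succ, Finset.sum_range_succ]
      simp [hgdef]
    rwa [hv] at this
  have h5 : HasSum (fun k : ℕ => (k:ℝ) * nuAlpha α k)
      (Real.sqrt 3 / (2 * α - 1 + Real.sqrt 3)) := by
    have := h4.div_const (2 * α - 1 + Real.sqrt 3)
    have heq : (fun k : ℕ => (k:ℝ) * g k / (2 * α - 1 + Real.sqrt 3))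
        = fun k : ℕ => (k:ℝ) * nuAlpha α k := by
      funext k; rw [hnu k]; ring
    rwa [heq] at this
  have hmeanval : (∑' k : ℕ, (k : ℝ) * nuAlpha α k)
      = Real.sqrt 3 / (2 * α - 1 + Real.sqrt 3) := h5.tsum_eq
  refine ⟨?_, ?_, ?_, ?_, ?_⟩
  · -- nonnegativity
    intro k
    rw [hnu k]
    apply div_nonneg _ hD0.le
    match k with
    | 0 => simp [hgdef]; linarith
    | 1 => simp [hgdef]; linarith
    | (n+2) =>
        simp only [hgdef]
        rw [if_neg (by omega), if_neg (by omega)]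
        exact genBinom_32_sign (by omega)
  · -- sums to 1
    have h := hmain 1 ⟨by norm_num, le_refl 1⟩
    simp only [one_pow, mul_one] at h
    rw [h.tsum_eq, sub_self, Real.zero_rpow (by norm_num)]
    rw [div_eq_one_iff_eq hDne]
    ring
  · -- generating function
    intro z hz
    exact (hmain z hz).tsum_eq
  · -- mean value
    rw [hmeanval]
    have : (1 + 2 * (α - 1/2) / Real.sqrt 3) = (2 * α - 1 + Real.sqrt 3) / Real.sqrt 3 := by
      field_simp
      ring
    rw [this, inv_div]
  · -- criticality
    rw [hmeanval]
    constructor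
    · intro h
      rw [div_eq_one_iff_eq hDne] at h
      linarith
    · intro h
      subst h
      norm_num
end

section
/- Fix an integer k ≥ 1 and a real β > 1. For each i ∈ {1,…,k}, let (a_n^{(i)})_{n≥0} be a sequence of positive real numbers such that a_n^{(i)} ~ C_i·n^{−β} as n → ∞, for some constants C_i > 0. Then lim_{n→∞} n^β · Σ_{n_1+⋯+n_k = n, n_i ≥ 0} ∏_{i=1}^k a_{n_i}^{(i)} = Σ_{i=1}^k C_i · ∏_{j≠i} (Σ_{n=0}^∞ a_n^{(j)}), where each series Σ_{n=0}^∞ a_n^{(j)} converges since β > 1. -/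
open Real Filter Set

section Aux
open Finset

lemma sum_antidiagonalTuple_succ {M : Type*} [AddCommMonoid M] (k n : ℕ)
    (f : (Fin (k+1) → ℕ) → M) :
    ∑ t ∈ Finset.Nat.antidiagonalTuple (k+1) n, f t
      = ∑ p ∈ Finset.HasAntidiagonal.antidiagonal n, ∑ t ∈ Finset.Nat.antidiagonalTuple k p.2,
          f (Fin.cons p.1 t) := by
  rw [Finset.sum_sigma']
  refine Finset.sum_nbij' (fun t => ⟨(t 0, ∑ i : Fin k, t i.succ), Fin.tail t⟩)
    (fun p => Fin.cons p.1.1 p.2) ?_ ?_ ?_ ?_ ?_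
  · intro t ht
    simp only [Finset.Nat.mem_antidiagonalTuple, Fin.sum_univ_succ] at ht
    simp [Finset.mem_sigma, Finset.mem_antidiagonal, Finset.Nat.mem_antidiagonalTuple,
      Fin.tail, ← ht]
  · rintro ⟨⟨x, y⟩, t⟩ hp
    simp only [Finset.mem_sigma, Finset.HasAntidiagonal.mem_antidiagonal,
      Finset.Nat.mem_antidiagonalTuple] at hp
    simp [Finset.Nat.mem_antidiagonalTuple, Fin.sum_univ_succ, hp.1, hp.2]
  · intro t ht
    simp [Fin.cons_self_tail]
  · rintro ⟨⟨x, y⟩, t⟩ hp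
    simp only [Finset.mem_sigma, Finset.mem_antidiagonal,
      Finset.Nat.mem_antidiagonalTuple] at hp
    simp [Fin.tail_cons, hp.2]
  · intro t ht
    simp [Fin.cons_self_tail]

section Helpers

/-- From `a n / (C n^{-β}) → 1` deduce `n^β * a n → C`. -/
lemma tendsto_rpow_mul_of_div {β C : ℝ} (hC : 0 < C) {a : ℕ → ℝ}
    (h : Tendsto (fun n : ℕ => a n / (C * (n : ℝ) ^ (-β))) atTop (nhds 1)) :
    Tendsto (fun n : ℕ => (n : ℝ) ^ β * a n) atTop (nhds C) := by
  have h2 := h.const_mul C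
  rw [mul_one] at h2
  refine h2.congr' ?_
  filter_upwards [eventually_ge_atTop 1] with n hn
  have hn0 : (0:ℝ) < (n:ℝ) := by exact_mod_cast Nat.lt_of_lt_of_le Nat.zero_lt_one hn
  have hne : ((n:ℝ)) ^ β ≠ 0 := (rpow_pos_of_pos hn0 β).ne'
  rw [Real.rpow_neg hn0.le]
  field_simp

/-- A sequence with `n^β * a n → C` is bounded above after multiplication by `n^β`. -/
lemma exists_bound {β : ℝ} {a : ℕ → ℝ} {C : ℝ}
    (h : Tendsto (fun n : ℕ => (n : ℝ) ^ β * a n) atTop (nhds C)) :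
    ∃ K : ℝ, 0 ≤ K ∧ ∀ n : ℕ, (n : ℝ) ^ β * a n ≤ K := by
  obtain ⟨K, hK⟩ := h.bddAbove_range
  refine ⟨max K 0, le_max_right _ _, fun n => ?_⟩
  exact le_trans (hK (Set.mem_range_self n)) (le_max_left _ _)

lemma summable_of_tendsto_rpow {β : ℝ} (hβ : 1 < β) {a : ℕ → ℝ} {C : ℝ}
    (hpos : ∀ n, 0 ≤ a n)
    (h : Tendsto (fun n : ℕ => (n : ℝ) ^ β * a n) atTop (nhds C)) :
    Summable a := by
  obtain ⟨K, hK0, hK⟩ := exists_bound h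
  rw [← summable_nat_add_iff 1]
  have hsum : Summable (fun n : ℕ => K * ((n + 1 : ℕ) : ℝ) ^ (-β)) := by
    apply Summable.mul_left
    exact (summable_nat_add_iff 1).2 (Real.summable_nat_rpow.2 (by linarith))
  refine hsum.of_nonneg_of_le (fun n => hpos _) (fun n => ?_)
  have hp : (0:ℝ) < ((n + 1 : ℕ) : ℝ) ^ β :=
    rpow_pos_of_pos (by exact_mod_cast Nat.succ_pos n) β
  rw [Real.rpow_neg (by positivity), ← div_eq_mul_inv, le_div_iff₀ hp, mul_comm]
  exact hK (n+1)

end Helpers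

/-- Splitting the convolution sum into two halves. -/
lemma tsum_split (n : ℕ) (a b : ℕ → ℝ) (c : ℝ) :
    (∑' m : ℕ, if 2 * m + 0 ≤ n then c * (a m * b (n - m)) else 0)
      + (∑' m : ℕ, if 2 * m + 1 ≤ n then c * (b m * a (n - m)) else 0)
    = c * ∑ p ∈ Finset.HasAntidiagonal.antidiagonal n, a p.1 * b p.2 := by
  have h1 : (∑' m : ℕ, if 2 * m + 0 ≤ n then c * (a m * b (n - m)) else 0)
      = ∑ m ∈ Finset.range (n+1), if 2 * m + 0 ≤ n then c * (a m * b (n - m)) else 0 := by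
    refine tsum_eq_sum (fun m hm => ?_)
    rw [Finset.mem_range] at hm
    rw [if_neg (by omega)]
  have h2 : (∑' m : ℕ, if 2 * m + 1 ≤ n then c * (b m * a (n - m)) else 0)
      = ∑ m ∈ Finset.range (n+1), if 2 * m + 1 ≤ n then c * (b m * a (n - m)) else 0 := by
    refine tsum_eq_sum (fun m hm => ?_)
    rw [Finset.mem_range] at hm
    rw [if_neg (by omega)]
  rw [h1, h2, Finset.Nat.sum_antidiagonal_eq_sum_range_succ_mk, Finset.mul_sum]
  rw [← Finset.sum_range_reflect (fun m => if 2 * m + 1 ≤ n then c * (b m * a (n - m)) else 0) (n+1)]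
  rw [← Finset.sum_add_distrib]
  refine Finset.sum_congr rfl (fun m hm => ?_)
  rw [Finset.mem_range] at hm
  have hmn : m ≤ n := by omega
  have hrev : n + 1 - 1 - m = n - m := by omega
  rw [hrev]
  have hnm : n - (n - m) = m := by omega
  rw [hnm]
  by_cases hc : 2 * m ≤ n
  · rw [if_pos (by omega), if_neg (by omega)]
    ring
  · rw [if_neg (by omega), if_pos (by omega)]
    ring

lemma half (β : ℝ) (hβ : 1 < β) (c : ℕ) (a b : ℕ → ℝ) (B : ℝ)
    (hapos : ∀ n, 0 < a n) (hbpos : ∀ n, 0 < b n)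
    (hsa : Summable a)
    (hbb : Tendsto (fun n : ℕ => (n:ℝ)^β * b n) atTop (nhds B)) :
    Tendsto (fun n : ℕ => ∑' m : ℕ, if 2*m + c ≤ n then (n:ℝ)^β * (a m * b (n-m)) else 0)
      atTop (nhds (B * ∑' m, a m)) := by
  obtain ⟨K, hK0, hK⟩ := exists_bound hbb
  have hβ0 : (0:ℝ) ≤ β := by linarith
  have h2β : (0:ℝ) ≤ (2:ℝ)^β := (rpow_pos_of_pos two_pos β).le
  have key := tendsto_tsum_of_dominated_convergence
    (𝓕 := atTop) (f := fun (n m : ℕ) => if 2*m + c ≤ n then (n:ℝ)^β * (a m * b (n-m)) else 0)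
    (g := fun m => a m * B) (bound := fun m => (2:ℝ)^β * K * a m)
    (hsa.mul_left _) ?_ ?_
  · rwa [tsum_mul_right, mul_comm] at key
  · -- pointwise convergence
    intro m
    have hnm : Tendsto (fun n : ℕ => ((n - m : ℕ):ℝ)^β * b (n - m)) atTop (nhds B) :=
      hbb.comp (tendsto_sub_atTop_nat m)
    have hmdiv : Tendsto (fun n : ℕ => (m:ℝ) / (n:ℝ)) atTop (nhds 0) :=
      tendsto_const_nhds.div_atTop tendsto_natCast_atTop_atTop
    have hratio : Tendsto (fun n : ℕ => ((n:ℝ) - (m:ℝ)) / (n:ℝ)) atTop (nhds 1) := by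
      have h' := (tendsto_const_nhds : Tendsto (fun _ : ℕ => (1:ℝ)) atTop (nhds 1)) |>.sub hmdiv
      rw [sub_zero] at h'
      refine h'.congr' ?_
      filter_upwards [eventually_ge_atTop 1] with n hn
      have : (n:ℝ) ≠ 0 := by positivity
      field_simp
    have hr : Tendsto (fun n : ℕ => (n:ℝ) / ((n:ℝ) - (m:ℝ))) atTop (nhds 1) := by
      have h' := hratio.inv₀ one_ne_zero
      rw [inv_one] at h'
      refine h'.congr (fun n => ?_)
      rw [inv_div]
    have hrp : Tendsto (fun n : ℕ => ((n:ℝ) / ((n:ℝ) - (m:ℝ)))^β) atTop (nhds 1) := by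
      have hc := (Real.continuousAt_rpow_const 1 β (Or.inl one_ne_zero)).tendsto.comp hr
      rwa [Real.one_rpow] at hc
    have main := (tendsto_const_nhds : Tendsto (fun _ : ℕ => a m) atTop (nhds (a m))).mul (hrp.mul hnm)
    rw [one_mul] at main
    refine main.congr' ?_
    filter_upwards [eventually_ge_atTop (2*m + c + 1)] with n hn
    have hmn : m ≤ n := by omega
    have hm1 : m + 1 ≤ n := by omega
    have hcast : ((n - m : ℕ):ℝ) = (n:ℝ) - (m:ℝ) := by
      rw [Nat.cast_sub hmn]
    have hnpos : (0:ℝ) < (n:ℝ) := by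
      have : 1 ≤ n := by omega
      exact_mod_cast Nat.lt_of_lt_of_le Nat.zero_lt_one this
    have hdpos : (0:ℝ) < (n:ℝ) - (m:ℝ) := by
      have : m + 1 ≤ n := hm1
      have := (Nat.cast_le (α := ℝ)).2 this
      push_cast at this
      linarith
    have hdne : ((n:ℝ) - (m:ℝ)) ^ β ≠ 0 := (rpow_pos_of_pos hdpos β).ne'
    rw [hcast, div_rpow hnpos.le hdpos.le]
    rw [if_pos (by omega)]
    field_simp
  · -- bound
    refine Eventually.of_forall (fun n => fun m => ?_)
    by_cases hc : 2*m + c ≤ n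
    · rw [if_pos hc]
      have hterm : (0:ℝ) ≤ (n:ℝ)^β * (a m * b (n-m)) :=
        mul_nonneg (Real.rpow_nonneg (Nat.cast_nonneg n) β)
          (mul_nonneg (hapos m).le (hbpos _).le)
      rw [Real.norm_eq_abs, abs_of_nonneg hterm]
      have hle : (n:ℝ) ≤ 2 * ((n - m : ℕ):ℝ) := by
        have : n ≤ 2 * (n - m) := by omega
        exact_mod_cast this
      have hpow : (n:ℝ)^β ≤ (2:ℝ)^β * ((n - m : ℕ):ℝ)^β := by
        rw [← Real.mul_rpow (by norm_num) (Nat.cast_nonneg _)]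
        exact Real.rpow_le_rpow (Nat.cast_nonneg _) hle hβ0
      calc (n:ℝ)^β * (a m * b (n-m)) = a m * ((n:ℝ)^β * b (n-m)) := by ring
        _ ≤ a m * ((2:ℝ)^β * ((n - m : ℕ):ℝ)^β * b (n-m)) := by
            apply mul_le_mul_of_nonneg_left _ (hapos m).le
            exact mul_le_mul_of_nonneg_right hpow (hbpos _).le
        _ = a m * ((2:ℝ)^β * (((n - m : ℕ):ℝ)^β * b (n-m))) := by ring
        _ ≤ a m * ((2:ℝ)^β * K) := by
            apply mul_le_mul_of_nonneg_left _ (hapos m).le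
            exact mul_le_mul_of_nonneg_left (hK _) h2β
        _ = (2:ℝ)^β * K * a m := by ring
    · rw [if_neg hc]
      simp only [norm_zero]
      exact mul_nonneg (mul_nonneg h2β hK0) (hapos m).le

lemma tsum_prod_aux (k : ℕ) (c : Fin k → ℕ → ℝ) (hpos : ∀ i n, 0 ≤ c i n)
    (hs : ∀ i, Summable (c i)) :
    Summable (fun n => ∑ t ∈ Finset.Nat.antidiagonalTuple k n, ∏ i, c i (t i)) ∧
    ∑' n, ∑ t ∈ Finset.Nat.antidiagonalTuple k n, ∏ i, c i (t i) = ∏ i, ∑' n, c i n := by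
  induction k with
  | zero =>
    have heq : (fun n => ∑ t ∈ Finset.Nat.antidiagonalTuple 0 n, ∏ i : Fin 0, c i (t i))
        = fun n => if n = 0 then (1:ℝ) else 0 := by
      funext n
      cases n with
      | zero => simp [Finset.Nat.antidiagonalTuple_zero_zero]
      | succ n => simp [Finset.Nat.antidiagonalTuple_zero_succ]
    rw [heq]
    constructor
    · apply summable_of_ne_finset_zero (s := {0})
      intro n hn
      rw [if_neg (by simpa using hn)]
    · rw [tsum_eq_single 0 (fun n hn => by rw [if_neg hn])]
      simp
  | succ k ih =>
    set d := fun m => ∑ t ∈ Finset.Nat.antidiagonalTuple k m, ∏ i : Fin k, c i.succ (t i)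
      with hd
    obtain ⟨hds, hdt⟩ := ih (fun i => c i.succ) (fun i n => hpos i.succ n) (fun i => hs i.succ)
    have heq : (fun n => ∑ t ∈ Finset.Nat.antidiagonalTuple (k+1) n, ∏ i : Fin (k+1), c i (t i))
        = fun n => ∑ p ∈ Finset.HasAntidiagonal.antidiagonal n, c 0 p.1 * d p.2 := by
      funext n
      rw [sum_antidiagonalTuple_succ]
      refine Finset.sum_congr rfl (fun p _ => ?_)
      rw [hd, Finset.mul_sum]
      refine Finset.sum_congr rfl (fun t _ => ?_)
      rw [Fin.prod_univ_succ]
      simp [Fin.cons_zero, Fin.cons_succ]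
    have hnorm0 : Summable (fun n => ‖c 0 n‖) := by
      refine (hs 0).congr (fun n => ?_)
      rw [Real.norm_eq_abs, abs_of_nonneg (hpos 0 n)]
    have hnormd : Summable (fun n => ‖d n‖) := by
      refine hds.congr (fun n => ?_)
      rw [Real.norm_eq_abs, abs_of_nonneg ?_]
      exact Finset.sum_nonneg (fun t _ => Finset.prod_nonneg (fun i _ => hpos i.succ _))
    rw [heq]
    constructor
    · exact (summable_norm_sum_mul_antidiagonal_of_summable_norm hnorm0 hnormd).of_norm
    · rw [← tsum_mul_tsum_eq_tsum_sum_antidiagonal_of_summable_norm hnorm0 hnormd,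
        Fin.prod_univ_succ, hdt]

lemma conv_tendsto (β : ℝ) (hβ : 1 < β) (a b : ℕ → ℝ) (A B : ℝ)
    (hapos : ∀ n, 0 < a n) (hbpos : ∀ n, 0 < b n)
    (hsa : Summable a) (hsb : Summable b)
    (haa : Tendsto (fun n : ℕ => (n:ℝ)^β * a n) atTop (nhds A))
    (hbb : Tendsto (fun n : ℕ => (n:ℝ)^β * b n) atTop (nhds B)) :
    Tendsto (fun n : ℕ => (n:ℝ)^β * ∑ p ∈ Finset.HasAntidiagonal.antidiagonal n, a p.1 * b p.2)
      atTop (nhds (B * ∑' m, a m + A * ∑' m, b m)) := by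
  have h1 := half β hβ 0 a b B hapos hbpos hsa hbb
  have h2 := half β hβ 1 b a A hbpos hapos hsb haa
  refine (h1.add h2).congr (fun n => ?_)
  exact tsum_split n a b ((n:ℝ)^β)

lemma prod_erase_eq_div {m : ℕ} (T : Fin m → ℝ) (hT : ∀ j, 0 < T j) (i : Fin m) :
    ∏ j ∈ Finset.univ.erase i, T j = (∏ j, T j) / T i := by
  rw [eq_div_iff (hT i).ne']
  exact Finset.prod_erase_mul Finset.univ T (Finset.mem_univ i)

lemma main_aux (β : ℝ) (hβ : 1 < β) :
    ∀ k (a : Fin (k+1) → ℕ → ℝ) (C : Fin (k+1) → ℝ),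
      (∀ i n, 0 < a i n) → (∀ i, 0 < C i) →
      (∀ i, Tendsto (fun n : ℕ => (n:ℝ)^β * a i n) atTop (nhds (C i))) →
      Tendsto (fun n : ℕ =>
          (n:ℝ)^β * ∑ t ∈ Finset.Nat.antidiagonalTuple (k+1) n, ∏ i, a i (t i))
        atTop (nhds (∑ i, C i * ∏ j ∈ Finset.univ.erase i, ∑' n, a j n)) := by
  intro k
  induction k with
  | zero =>
    intro a C hpos hCpos ha
    have heq : (fun n : ℕ =>
        (n:ℝ)^β * ∑ t ∈ Finset.Nat.antidiagonalTuple 1 n, ∏ i, a i (t i))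
        = fun n : ℕ => (n:ℝ)^β * a 0 n := by
      funext n
      rw [Finset.Nat.antidiagonalTuple_one]
      simp
    rw [heq]
    have hr : (∑ i : Fin 1, C i * ∏ j ∈ Finset.univ.erase i, ∑' n, a j n) = C 0 := by
      simp
    rw [hr]
    exact ha 0
  | succ k ih =>
    intro a C hpos hCpos ha
    have hsum : ∀ i, Summable (a i) := fun i =>
      summable_of_tendsto_rpow hβ (fun n => (hpos i n).le) (ha i)
    have hSpos : ∀ j, 0 < ∑' n, a j n := fun j =>
      Summable.tsum_pos (hsum j) (fun n => (hpos j n).le) 0 (hpos j 0)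
    set S : Fin (k+2) → ℝ := fun j => ∑' n, a j n with hS
    set b : ℕ → ℝ := fun m => ∑ t ∈ Finset.Nat.antidiagonalTuple (k+1) m,
        ∏ i : Fin (k+1), a i.succ (t i) with hb
    have hbpos : ∀ m, 0 < b m := by
      intro m
      apply Finset.sum_pos
      · intro t _
        exact Finset.prod_pos (fun i _ => hpos i.succ _)
      · exact ⟨Fin.cons m 0, by
          simp [Finset.Nat.mem_antidiagonalTuple, Fin.sum_univ_succ]⟩
    set CB : ℝ := ∑ i : Fin (k+1), C i.succ * ∏ j ∈ Finset.univ.erase i, ∑' n, a j.succ n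
      with hCB
    have hbtend : Tendsto (fun n : ℕ => (n:ℝ)^β * b n) atTop (nhds CB) :=
      ih (fun i => a i.succ) (fun i => C i.succ) (fun i n => hpos i.succ n)
        (fun i => hCpos i.succ) (fun i => ha i.succ)
    obtain ⟨hbs, hbt⟩ := tsum_prod_aux (k+1) (fun i => a i.succ)
      (fun i n => (hpos i.succ n).le) (fun i => hsum i.succ)
    have heq : (fun n : ℕ =>
        (n:ℝ)^β * ∑ t ∈ Finset.Nat.antidiagonalTuple (k+2) n, ∏ i, a i (t i))
        = fun n : ℕ => (n:ℝ)^β * ∑ p ∈ Finset.HasAntidiagonal.antidiagonal n, a 0 p.1 * b p.2 := by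
      funext n
      congr 1
      rw [sum_antidiagonalTuple_succ]
      refine Finset.sum_congr rfl (fun p _ => ?_)
      rw [hb, Finset.mul_sum]
      refine Finset.sum_congr rfl (fun t _ => ?_)
      rw [Fin.prod_univ_succ]
      simp
    rw [heq]
    have hconv := conv_tendsto β hβ (a 0) b (C 0) CB (hpos 0) hbpos (hsum 0) hbs
      (ha 0) hbtend
    -- identify the limit
    have hSb : (∑' m, b m) = ∏ i : Fin (k+1), S i.succ := hbt
    have hfin : CB * (∑' m, a 0 m) + C 0 * (∑' m, b m)
        = ∑ i : Fin (k+2), C i * ∏ j ∈ Finset.univ.erase i, ∑' n, a j n := by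
      have hP : (∏ j : Fin (k+2), S j) = S 0 * ∏ j : Fin (k+1), S j.succ :=
        Fin.prod_univ_succ S
      have hSpos' : ∀ j : Fin (k+1), 0 < S j.succ := fun j => hSpos j.succ
      have herase : ∀ i : Fin (k+2),
          (∏ j ∈ Finset.univ.erase i, ∑' n, a j n) = (∏ j : Fin (k+2), S j) / S i :=
        fun i => prod_erase_eq_div S hSpos i
      have herase' : ∀ i : Fin (k+1),
          (∏ j ∈ Finset.univ.erase i, ∑' n, a j.succ n)
            = (∏ j : Fin (k+1), S j.succ) / S i.succ :=
        fun i => prod_erase_eq_div (fun j : Fin (k+1) => S j.succ) hSpos' i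
      have h0 : S 0 ≠ 0 := (hSpos 0).ne'
      have ha0 : (∑' m, a 0 m) = S 0 := rfl
      rw [Fin.sum_univ_succ, hSb, hCB, add_comm, ha0]
      simp only [herase, herase']
      congr 1
      · rw [hP]
        field_simp
      · rw [Finset.sum_mul]
        refine Finset.sum_congr rfl (fun i _ => ?_)
        have hi : S i.succ ≠ 0 := (hSpos i.succ).ne'
        rw [hP]
        field_simp
    rw [← hfin]
    exact hconv


end Aux

section Main
open Finset in
/-- Lemma 3.5: if for each `i ∈ {1,…,k}` the positive sequence `a^{(i)}` satisfies
`a_n^{(i)} ~ C_i n^{-β}` with `β > 1`, then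
`n^β Σ_{n₁+⋯+n_k = n} Π_i a_{n_i}^{(i)} → Σ_i C_i Π_{j ≠ i} Σ_{n≥0} a_n^{(j)}`. -/
theorem sum_over_compositions_asymptotics (k : ℕ) (hk : 1 ≤ k) (β : ℝ) (hβ : 1 < β)
    (a : Fin k → ℕ → ℝ) (C : Fin k → ℝ)
    (ha_pos : ∀ i n, 0 < a i n) (hC_pos : ∀ i, 0 < C i)
    (ha : ∀ i, Filter.Tendsto (fun n : ℕ => a i n / (C i * (n : ℝ) ^ (-β))) atTop
      (nhds 1)) :
    Filter.Tendsto
      (fun n : ℕ =>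
        (n : ℝ) ^ β *
          ∑ t ∈ Finset.Nat.antidiagonalTuple k n, ∏ i : Fin k, a i (t i))
      atTop
      (nhds (∑ i : Fin k, C i * ∏ j ∈ Finset.univ.erase i, ∑' n : ℕ, a j n)) := by
  obtain ⟨k', rfl⟩ : ∃ k', k = k' + 1 := ⟨k - 1, by omega⟩
  exact main_aux β hβ k' a C ha_pos hC_pos
    (fun i => tendsto_rpow_mul_of_div (hC_pos i) (ha i))

end Main
end

section
/- Fix α ∈ (1,2). (a) There exists ε > 0 such that for all η, t ∈ [0, ε] with (η, t) ≠ (0,0), Re((−η + i·t)^α) ≤ η^α − |cos(απ/2)|·t^α, where the complex power is the principal branch. (b) For all η, t ≥ 0 with (η,t) ≠ (0,0), |−η + i·t|^α ≤ 2·(η^α + t^α). -/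
open Real Filter Set Complex

/-- `cos ψ ^ (1+β) ≤ cos ((1+β) ψ) + sin ψ ^ (1+β)` for `ψ ∈ [0, π/2]`, `β ∈ (0,1)`. -/
lemma cpow_estimates_aux_U (β : ℝ) (hβ0 : 0 < β) (hβ1 : β < 1) (ψ : ℝ)
    (h1 : 0 ≤ ψ) (h2 : ψ ≤ Real.pi / 2) :
    (Real.cos ψ) ^ (1 + β) ≤ Real.cos ((1 + β) * ψ) + (Real.sin ψ) ^ (1 + β) := by
  rcases eq_or_lt_of_le h1 with h0 | h0
  · rw [← h0]
    simp [Real.zero_rpow (by positivity : (1:ℝ) + β ≠ 0), Real.one_rpow]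
  have hx0 : 0 ≤ Real.cos ψ := Real.cos_nonneg_of_mem_Icc ⟨by linarith [Real.pi_pos], h2⟩
  have hx1 : Real.cos ψ ≤ 1 := Real.cos_le_one ψ
  have hs0 : 0 < Real.sin ψ := Real.sin_pos_of_pos_of_lt_pi h0 (by linarith [Real.pi_pos])
  have hs1 : Real.sin ψ ≤ 1 := Real.sin_le_one ψ
  have hxa : (Real.cos ψ) ^ ((1:ℝ) + β) = Real.cos ψ * (Real.cos ψ) ^ β := by
    rw [Real.rpow_add' hx0 (by positivity), Real.rpow_one]
  have hsa : (Real.sin ψ) ^ ((1:ℝ) + β) = Real.sin ψ * (Real.sin ψ) ^ β := by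
    rw [Real.rpow_add' (le_of_lt hs0) (by positivity), Real.rpow_one]
  -- AM--GM : cos ψ ^ β ≤ β * cos ψ + (1 - β)
  have hamgm : (Real.cos ψ) ^ β ≤ β * Real.cos ψ + (1 - β) * 1 := by
    have := Real.geom_mean_le_arith_mean2_weighted (w₁ := β) (w₂ := 1 - β)
      (p₁ := Real.cos ψ) (p₂ := 1) (le_of_lt hβ0) (by linarith) hx0 zero_le_one (by ring)
    calc (Real.cos ψ) ^ β = (Real.cos ψ) ^ β * (1:ℝ) ^ (1 - β) := by
          rw [Real.one_rpow, mul_one]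
      _ ≤ β * Real.cos ψ + (1 - β) * 1 := this
  -- concavity of cos : β * cos ψ + (1 - β) ≤ cos (β * ψ)
  have hconc : β * Real.cos ψ + (1 - β) * 1 ≤ Real.cos (β * ψ) := by
    have hmem1 : ψ ∈ Set.Icc (-(Real.pi / 2)) (Real.pi / 2) := ⟨by linarith [Real.pi_pos], h2⟩
    have hmem0 : (0 : ℝ) ∈ Set.Icc (-(Real.pi / 2)) (Real.pi / 2) :=
      ⟨by linarith [Real.pi_pos], by linarith [Real.pi_pos]⟩
    have h := strictConcaveOn_cos_Icc.concaveOn.2 hmem1 hmem0 (le_of_lt hβ0)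
      (by linarith : (0:ℝ) ≤ 1 - β) (by ring)
    have he : β • ψ + (1 - β) • (0:ℝ) = β * ψ := by simp [smul_eq_mul]
    rw [he] at h
    simpa [smul_eq_mul, Real.cos_zero] using h
  have hcosadd : Real.cos ((1 + β) * ψ) = Real.cos ψ * Real.cos (β * ψ)
      - Real.sin ψ * Real.sin (β * ψ) := by
    have h : (1 + β) * ψ = ψ + β * ψ := by ring
    rw [h, Real.cos_add]
  -- sin (β ψ) ≤ sin ψ ^ β
  have hsinb : Real.sin (β * ψ) ≤ (Real.sin ψ) ^ β := by
    have h1' : Real.sin (β * ψ) ≤ Real.sin ψ := by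
      apply Real.strictMonoOn_sin.monotoneOn
        ⟨by nlinarith [Real.pi_pos], by nlinarith⟩ ⟨by linarith [Real.pi_pos], h2⟩
      nlinarith
    have h2' : Real.sin ψ ≤ (Real.sin ψ) ^ β := by
      have := Real.rpow_le_rpow_of_exponent_ge hs0 hs1 (le_of_lt hβ1)
      rwa [Real.rpow_one] at this
    linarith
  have key1 : (Real.cos ψ) ^ ((1:ℝ) + β) ≤ Real.cos ψ * Real.cos (β * ψ) := by
    rw [hxa]
    calc Real.cos ψ * (Real.cos ψ) ^ β ≤ Real.cos ψ * (β * Real.cos ψ + (1 - β) * 1) :=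
          mul_le_mul_of_nonneg_left hamgm hx0
      _ ≤ Real.cos ψ * Real.cos (β * ψ) := mul_le_mul_of_nonneg_left hconc hx0
  have key2 : Real.sin ψ * Real.sin (β * ψ) ≤ (Real.sin ψ) ^ ((1:ℝ) + β) := by
    rw [hsa]
    exact mul_le_mul_of_nonneg_left hsinb (le_of_lt hs0)
  linarith [key1, key2, hcosadd.ge]

/-- Key angular inequality. -/
lemma cpow_estimates_aux_key (α : ℝ) (hα1 : 1 < α) (hα2 : α < 2) (θ : ℝ)
    (h1 : Real.pi / 2 ≤ θ) (h2 : θ ≤ Real.pi) :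
    Real.cos (θ * α) ≤ (-Real.cos θ) ^ α - |Real.cos (α * Real.pi / 2)| * (Real.sin θ) ^ α := by
  have hpi := Real.pi_pos
  obtain ⟨ψ, hθ, hψ0, hψ2⟩ : ∃ ψ, θ = ψ + Real.pi / 2 ∧ 0 ≤ ψ ∧ ψ ≤ Real.pi / 2 :=
    ⟨θ - Real.pi / 2, by ring, by linarith, by linarith⟩
  subst hθ
  have hcosθ : -Real.cos (ψ + Real.pi / 2) = Real.sin ψ := by
    rw [Real.cos_add_pi_div_two, neg_neg]
  have hsinθ : Real.sin (ψ + Real.pi / 2) = Real.cos ψ := Real.sin_add_pi_div_two ψ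
  have hc0 : Real.cos (α * Real.pi / 2) ≤ 0 := by
    apply Real.cos_nonpos_of_pi_div_two_le_of_le
    · nlinarith
    · nlinarith
  have hc1 : -1 ≤ Real.cos (α * Real.pi / 2) := Real.neg_one_le_cos _
  have habs : |Real.cos (α * Real.pi / 2)| = -Real.cos (α * Real.pi / 2) := abs_of_nonpos hc0
  have hexp : Real.cos ((ψ + Real.pi / 2) * α) = Real.cos (α * ψ) * Real.cos (α * Real.pi / 2)
      - Real.sin (α * ψ) * Real.sin (α * Real.pi / 2) := by
    have h : (ψ + Real.pi / 2) * α = α * ψ + α * Real.pi / 2 := by ring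
    rw [h, Real.cos_add]
  have hsin1 : 0 ≤ Real.sin (α * ψ) := Real.sin_nonneg_of_nonneg_of_le_pi
    (by positivity)
    (by nlinarith [mul_le_mul (le_of_lt hα2) hψ2 hψ0 (by norm_num : (0:ℝ) ≤ 2)])
  have hsin2 : 0 ≤ Real.sin (α * Real.pi / 2) := Real.sin_nonneg_of_nonneg_of_le_pi
    (by nlinarith) (by nlinarith)
  have hstep : Real.cos ((ψ + Real.pi / 2) * α)
      ≤ Real.cos (α * ψ) * Real.cos (α * Real.pi / 2) := by
    rw [hexp]; nlinarith [mul_nonneg hsin1 hsin2]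
  rw [hcosθ, hsinθ, habs]
  have hU := cpow_estimates_aux_U (α - 1) (by linarith) (by linarith) ψ hψ0 hψ2
  rw [show (1:ℝ) + (α - 1) = α by ring] at hU
  have hsa : 0 ≤ (Real.sin ψ) ^ α := Real.rpow_nonneg
    (Real.sin_nonneg_of_nonneg_of_le_pi hψ0 (by linarith)) _
  rcases le_or_gt ((Real.cos ψ) ^ α) (Real.cos (α * ψ)) with h | h
  · nlinarith [mul_nonpos_of_nonpos_of_nonneg hc0
      (by linarith : (0:ℝ) ≤ Real.cos (α * ψ) - (Real.cos ψ) ^ α)]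
  · nlinarith

/-- (a) For `α ∈ (1,2)`, there is `ε > 0` such that for `η, t ∈ [0, ε]` not both zero,
`Re((-η + it)^α) ≤ η^α - |cos(απ/2)| t^α` (principal branch of the complex power);
(b) for all `η, t ≥ 0` not both zero, `|-η + it|^α ≤ 2(η^α + t^α)`. -/
theorem cpow_estimates (α : ℝ) (hα : α ∈ Set.Ioo (1 : ℝ) 2) :
    (∃ ε > (0 : ℝ), ∀ η t : ℝ, η ∈ Set.Icc (0 : ℝ) ε → t ∈ Set.Icc (0 : ℝ) ε →
      (η, t) ≠ (0, 0) →
      ((-(η : ℂ) + (t : ℂ) * Complex.I) ^ (α : ℂ)).re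
        ≤ η ^ α - |Real.cos (α * Real.pi / 2)| * t ^ α)
    ∧ (∀ η t : ℝ, 0 ≤ η → 0 ≤ t → (η, t) ≠ (0, 0) →
        ‖-(η : ℂ) + (t : ℂ) * Complex.I‖ ^ α
          ≤ 2 * (η ^ α + t ^ α)) := by
  obtain ⟨hα1, hα2⟩ := hα
  have hα0 : (0:ℝ) < α := by linarith
  constructor
  · refine ⟨1, one_pos, fun η t hη ht hne => ?_⟩
    obtain ⟨hη0, _⟩ := hη
    obtain ⟨ht0, _⟩ := ht
    set z : ℂ := -(η : ℂ) + (t : ℂ) * Complex.I with hz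
    have hzre : z.re = -η := by simp [hz]
    have hzim : z.im = t := by simp [hz]
    have hz0 : z ≠ 0 := by
      intro h
      apply hne
      have h1 : z.re = 0 := by rw [h]; simp
      have h2 : z.im = 0 := by rw [h]; simp
      rw [hzre] at h1; rw [hzim] at h2
      simp [Prod.ext_iff]
      constructor <;> linarith
    have hr0 : 0 < ‖z‖ := norm_pos_iff.mpr hz0
    set r : ℝ := ‖z‖ with hr
    set θ : ℝ := Complex.arg z with hθdef
    have hre : (z ^ (α : ℂ)).re = r ^ α * Real.cos (θ * α) := by
      rw [Complex.cpow_def_of_ne_zero hz0, Complex.exp_re]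
      have h1 : (Complex.log z * (α:ℂ)).re = Real.log r * α := by
        simp [Complex.log_re, hr]
      have h2 : (Complex.log z * (α:ℂ)).im = θ * α := by
        simp [Complex.log_im, hθdef]
      rw [h1, h2, Real.rpow_def_of_pos hr0]
    have hcos : Real.cos θ = -η / r := by
      rw [hθdef, Complex.cos_arg hz0, hzre]
    have hsin : Real.sin θ = t / r := by
      rw [hθdef, Complex.sin_arg, hzim]
    have hη_eq : η = r * (-Real.cos θ) := by
      rw [hcos]; field_simp
    have ht_eq : t = r * Real.sin θ := by
      rw [hsin]; field_simp
    have hθpi : θ ≤ Real.pi := Complex.arg_le_pi z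
    have hθ0 : 0 ≤ θ := by
      rw [hθdef, Complex.arg_nonneg_iff, hzim]; exact ht0
    have hθhalf : Real.pi / 2 ≤ θ := by
      by_contra hlt
      push_neg at hlt
      have hcpos : 0 < Real.cos θ := Real.cos_pos_of_mem_Ioo
        ⟨by linarith [Real.pi_pos], hlt⟩
      rw [hcos] at hcpos
      have : 0 < -η := by
        by_contra hn
        push_neg at hn
        nlinarith [div_nonpos_of_nonpos_of_nonneg (by linarith : -η ≤ 0) (le_of_lt hr0)]
      linarith
    have hkey := cpow_estimates_aux_key α hα1 hα2 θ hθhalf hθpi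
    have hcos0 : 0 ≤ -Real.cos θ := by
      rw [hη_eq] at hη0
      nlinarith
    have hsin0 : 0 ≤ Real.sin θ := Real.sin_nonneg_of_nonneg_of_le_pi hθ0 hθpi
    rw [hre, hη_eq, ht_eq, Real.mul_rpow (le_of_lt hr0) hcos0,
      Real.mul_rpow (le_of_lt hr0) hsin0]
    have hra : 0 ≤ r ^ α := Real.rpow_nonneg (le_of_lt hr0) _
    nlinarith [mul_le_mul_of_nonneg_left hkey hra]
  · intro η t hη0 ht0 _
    set z : ℂ := -(η : ℂ) + (t : ℂ) * Complex.I with hz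
    have habs : ‖z‖ = Real.sqrt (η^2 + t^2) := by
      rw [Complex.norm_def, Complex.normSq_apply]
      congr 1
      simp [hz]
      ring
    set m : ℝ := max η t with hm
    have hm0 : 0 ≤ m := le_trans hη0 (le_max_left _ _)
    have h1 : ‖z‖ ≤ Real.sqrt 2 * m := by
      rw [habs]
      have hle : η^2 + t^2 ≤ 2 * m^2 := by
        have h1 : η ≤ m := le_max_left _ _
        have h2 : t ≤ m := le_max_right _ _
        nlinarith
      calc Real.sqrt (η^2 + t^2) ≤ Real.sqrt (2 * m^2) := Real.sqrt_le_sqrt hle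
        _ = Real.sqrt 2 * m := by
            rw [Real.sqrt_mul (by norm_num), Real.sqrt_sq hm0]
    have h2 : ‖z‖ ^ α ≤ (Real.sqrt 2) ^ α * m ^ α := by
      rw [← Real.mul_rpow (Real.sqrt_nonneg 2) hm0]
      exact Real.rpow_le_rpow (norm_nonneg z) h1 (le_of_lt hα0)
    have h3 : (Real.sqrt 2 : ℝ) ^ α ≤ 2 := by
      rw [Real.sqrt_eq_rpow, ← Real.rpow_mul (by norm_num)]
      calc (2:ℝ) ^ (1/2 * α) ≤ (2:ℝ) ^ (1:ℝ) :=
            Real.rpow_le_rpow_of_exponent_le (by norm_num) (by linarith)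
        _ = 2 := Real.rpow_one 2
    have h4 : m ^ α ≤ η ^ α + t ^ α := by
      rcases max_cases η t with ⟨he, _⟩ | ⟨he, _⟩ <;> rw [hm, he]
      · nlinarith [Real.rpow_nonneg ht0 α]
      · nlinarith [Real.rpow_nonneg hη0 α]
    have hma : 0 ≤ m ^ α := Real.rpow_nonneg hm0 _
    nlinarith [Real.rpow_nonneg (norm_nonneg z) α]
end
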